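/- Let m, n ≥ 1 and let x, a, b be real numbers. Let K̃ be the 2mn×2mn complex matrix K̃ = I_n ⊗ T_{2m}(−a, x, a) + T_n(−b, 0, b) ⊗ J_{2m} + i·b·(E_{nn} ⊗ J_{2m}), where E_{nn} is the n×n matrix whose only nonzero entry is a 1 in position (n, n). Then det K̃ = ∏_{j=1}^{m} ∏_{k=1}^{n} ( x² + 4a² cos²(jπ/(2m+1)) + 4b² cos²(kπ/(2n+1)) ); in particular det K̃ is real and its square equals the partition function of the monopole-dimer model on the 2m×2n grid graph. -/

import Mathlib

open Matrix Kronecker Real Finset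

/-- The `n × n` tridiagonal Toeplitz matrix with `c₀` on the diagonal, `c₁` on the
superdiagonal and `c₋₁` on the subdiagonal. -/
def triToeplitz (n : ℕ) (cm c0 cp : ℂ) : Matrix (Fin n) (Fin n) ℂ :=
  Matrix.of fun j k =>
    if j = k then c0
    else if (j : ℕ) + 1 = (k : ℕ) then cp
    else if (k : ℕ) + 1 = (j : ℕ) then cm
    else 0

/-- The `m × m` antidiagonal matrix of ones. -/
def antiDiagOnes (m : ℕ) : Matrix (Fin m) (Fin m) ℂ :=
  Matrix.of fun j k => if (j : ℕ) + (k : ℕ) + 1 = m then 1 else 0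

/-- The `n × n` matrix whose only nonzero entry is a `1` in the bottom-right corner. -/
def cornerOne (n : ℕ) : Matrix (Fin n) (Fin n) ℂ :=
  Matrix.of fun j k => if (j : ℕ) = n - 1 ∧ (k : ℕ) = n - 1 then 1 else 0


namespace QGD

lemma omega_pow (θ : ℝ) (k : ℕ) :
    Complex.exp (θ * Complex.I) ^ k = Complex.exp ((k * θ : ℝ) * Complex.I) := by
  rw [← Complex.exp_nat_mul]; push_cast; ring_nf

lemma omega_ne_one (N d : ℕ) (h0 : 0 < d) (hlt : d < 2 * (N + 1)) :
    Complex.exp ((d * π / (N + 1) : ℝ) * Complex.I) ≠ 1 := by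
  rw [Ne, Complex.exp_eq_one_iff]
  rintro ⟨t, ht⟩
  have h1 : ((d * π / (N + 1) : ℝ) : ℂ) * Complex.I = ((2 * π * t : ℝ) : ℂ) * Complex.I := by
    rw [ht]; push_cast; ring
  have h2 : (d * π / (N + 1) : ℝ) = 2 * π * t := by
    have := mul_right_cancel₀ Complex.I_ne_zero h1
    exact_mod_cast this
  have hN1 : ((N : ℝ) + 1) ≠ 0 := by positivity
  have h3 : (d : ℝ) * π = 2 * π * t * (N + 1) := by
    field_simp at h2; rw [h2]; ring
  have h4 : (d : ℝ) = 2 * t * (N + 1) := by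
    have hπ := Real.pi_pos
    nlinarith [h3]
  have h5 : (d : ℤ) = 2 * t * (N + 1) := by exact_mod_cast h4
  rcases le_or_gt t 0 with h | h
  · have : (d : ℤ) ≤ 0 := by nlinarith
    omega
  · have : (1 : ℤ) ≤ t := h
    have : (2 : ℤ) * (N + 1) ≤ d := by nlinarith
    omega

lemma cos_eq_re (θ : ℝ) (k : ℕ) :
    (Complex.exp (θ * Complex.I) ^ (k + 1)).re = Real.cos ((k + 1) * θ) := by
  rw [omega_pow]
  have : ((((k : ℕ) + 1 : ℕ) * θ : ℝ) : ℂ) = ((((k : ℝ) + 1) * θ : ℝ) : ℂ) := by push_cast; ring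
  rw [this, Complex.exp_ofReal_mul_I_re]

/-- Sum of cosines at even nonzero multiples of `π/(N+1)`. -/
lemma cos_sum_even (N d : ℕ) (hd : Even d) (h0 : 0 < d) (hlt : d < 2 * (N + 1)) :
    ∑ k ∈ Finset.range N, Real.cos ((k + 1) * (d * π / (N + 1))) = -1 := by
  set θ : ℝ := d * π / (N + 1) with hθ
  set ω : ℂ := Complex.exp (θ * Complex.I) with hω
  have hω1 : ω ≠ 1 := omega_ne_one N d h0 hlt
  have hpow : ω ^ (N + 1) = 1 := by
    obtain ⟨e, he⟩ := hd
    rw [hω, omega_pow]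
    have hN1 : ((N : ℝ) + 1) ≠ 0 := by positivity
    have h : ((N + 1 : ℕ) * θ : ℝ) = 2 * π * e := by
      rw [hθ]; push_cast [he]; field_simp; try ring
    rw [h]
    have h2 : ((2 * π * (e : ℝ) : ℝ) : ℂ) * Complex.I = ((e : ℤ) : ℂ) * (2 * π * Complex.I) := by
      push_cast; ring
    rw [h2, Complex.exp_int_mul_two_pi_mul_I]
  have hG : ∑ k ∈ Finset.range N, ω ^ (k + 1) = -1 := by
    have h1 : (∑ k ∈ Finset.range (N + 1), ω ^ k) * (ω - 1) = 0 := by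
      rw [geom_sum_mul, hpow, sub_self]
    have h2 : ∑ k ∈ Finset.range (N + 1), ω ^ k = 0 :=
      (mul_eq_zero.mp h1).resolve_right (sub_ne_zero.mpr hω1)
    rw [geom_sum_succ] at h2
    have hmul : ∑ k ∈ Finset.range N, ω ^ (k + 1) = ω * ∑ k ∈ Finset.range N, ω ^ k := by
      rw [Finset.mul_sum]; exact Finset.sum_congr rfl fun k _ => by ring
    rw [hmul]; linear_combination h2
  calc ∑ k ∈ Finset.range N, Real.cos ((k + 1) * θ)
      = (∑ k ∈ Finset.range N, ω ^ (k + 1)).re := by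
        rw [Complex.re_sum]
        exact Finset.sum_congr rfl fun k _ => (cos_eq_re θ k).symm
    _ = -1 := by rw [hG]; simp

/-- Sum of cosines at odd multiples of `π/(N+1)`. -/
lemma cos_sum_odd (N d : ℕ) (hd : Odd d) :
    ∑ k ∈ Finset.range N, Real.cos ((k + 1) * (d * π / (N + 1))) = 0 := by
  set θ : ℝ := d * π / (N + 1) with hθ
  set ω : ℂ := Complex.exp (θ * Complex.I) with hω
  have hpow : ω ^ (N + 1) = -1 := by
    rw [hω, omega_pow]
    have hN1 : ((N : ℝ) + 1) ≠ 0 := by positivity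
    have h : ((N + 1 : ℕ) * θ : ℝ) = d * π := by
      rw [hθ]; push_cast; field_simp; try ring
    rw [h]
    have h2 : ((d * π : ℝ) : ℂ) * Complex.I = ((d : ℕ) : ℂ) * (π * Complex.I) := by
      push_cast; ring
    rw [h2, Complex.exp_nat_mul, Complex.exp_pi_mul_I, hd.neg_one_pow]
  have hω1 : ω ≠ 1 := by
    intro h; rw [h, one_pow] at hpow; norm_num at hpow
  have hconj : (starRingEnd ℂ) ω * ω = 1 := by
    rw [hω, ← Complex.exp_conj, ← Complex.exp_add]
    have h0 : (starRingEnd ℂ) ((θ : ℂ) * Complex.I) + (θ : ℂ) * Complex.I = 0 := by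
      simp [Complex.conj_I, Complex.conj_ofReal]; try ring
    rw [h0, Complex.exp_zero]
  set G : ℂ := ∑ k ∈ Finset.range N, ω ^ (k + 1) with hGdef
  have hGmul : G * (ω - 1) = -1 - ω := by
    have hmul : G = ω * ∑ k ∈ Finset.range N, ω ^ k := by
      rw [hGdef, Finset.mul_sum]; exact Finset.sum_congr rfl fun k _ => by ring
    have hgs := geom_sum_mul ω N
    calc G * (ω - 1) = ω * ((∑ k ∈ Finset.range N, ω ^ k) * (ω - 1)) := by rw [hmul]; ring
      _ = ω * (ω ^ N - 1) := by rw [hgs]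
      _ = ω ^ (N + 1) - ω := by ring
      _ = -1 - ω := by rw [hpow]
  have h1 : (starRingEnd ℂ) G * ((starRingEnd ℂ) ω - 1) = -1 - (starRingEnd ℂ) ω := by
    have := congrArg (starRingEnd ℂ) hGmul
    simpa using this
  have hA : (starRingEnd ℂ) G * (1 - ω) = -ω - 1 := by
    linear_combination ω * h1 - ((starRingEnd ℂ) G + 1) * hconj
  have hsum0 : (G + (starRingEnd ℂ) G) * (ω - 1) = 0 := by
    linear_combination hGmul - hA
  have hGG : G + (starRingEnd ℂ) G = 0 :=
    (mul_eq_zero.mp hsum0).resolve_right (sub_ne_zero.mpr hω1)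
  have hre : G.re = 0 := by
    have h2 := (Complex.add_conj G).symm.trans hGG
    field_simp at h2
    have h3 : (2 : ℝ) * G.re = 0 := by exact_mod_cast h2
    linarith
  calc ∑ k ∈ Finset.range N, Real.cos ((k + 1) * θ)
      = G.re := by
        rw [hGdef, Complex.re_sum]
        exact Finset.sum_congr rfl fun k _ => (cos_eq_re θ k).symm
    _ = 0 := hre


lemma sin_reflect' (u : ℕ) (r : ℝ) :
    Real.sin ((u + 1) * π - r) = (-1) ^ u * Real.sin r := by
  have := Real.sin_nat_mul_pi_sub r (u + 1)
  push_cast at this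
  rw [this, pow_succ]; ring

lemma sin_orth_aux (N j j' : ℕ) (hj' : 1 ≤ j') (hle : j' ≤ j) (hj2 : j ≤ N) :
    ∑ k ∈ Finset.range N,
        Real.sin ((k + 1) * (j * π / (N + 1))) * Real.sin ((k + 1) * (j' * π / (N + 1)))
      = if j = j' then ((N : ℝ) + 1) / 2 else 0 := by
  have hkey : ∀ k ∈ Finset.range N,
      Real.sin ((k + 1) * (j * π / (N + 1))) * Real.sin ((k + 1) * (j' * π / (N + 1)))
        = (Real.cos ((k + 1) * ((j - j' : ℕ) * π / (N + 1)))
            - Real.cos ((k + 1) * ((j + j' : ℕ) * π / (N + 1)))) / 2 := by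
    intro k _
    set A : ℝ := (k + 1) * (j * π / (N + 1))
    set B : ℝ := (k + 1) * (j' * π / (N + 1))
    have e1 : ((k : ℝ) + 1) * ((j - j' : ℕ) * π / (N + 1)) = A - B := by
      push_cast [hle]; unfold A B; ring
    have e2 : ((k : ℝ) + 1) * ((j + j' : ℕ) * π / (N + 1)) = A + B := by
      push_cast; unfold A B; ring
    rw [e1, e2, Real.cos_sub, Real.cos_add]; ring
  rw [Finset.sum_congr rfl hkey, ← Finset.sum_div, Finset.sum_sub_distrib]
  by_cases h : j = j'
  · subst h
    simp only [Nat.sub_self, if_pos rfl]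
    have h1 : ∀ k ∈ Finset.range N,
        Real.cos ((k + 1) * ((0 : ℕ) * π / (N + 1))) = 1 := by
      intro k _; norm_num
    rw [Finset.sum_congr rfl h1, Finset.sum_const, Finset.card_range]
    have h2 : ∑ k ∈ Finset.range N, Real.cos ((k + 1) * ((j + j : ℕ) * π / (N + 1))) = -1 := by
      apply cos_sum_even <;> [skip; omega; omega]
      exact ⟨j, by omega⟩
    rw [h2]; push_cast; ring
  · rw [if_neg h]
    rcases Nat.even_or_odd (j - j') with he | ho
    · have he' : Even (j + j') := by
        rcases he with ⟨t, ht⟩; exact ⟨j - t, by omega⟩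
      rw [cos_sum_even N (j - j') he (by omega) (by omega),
        cos_sum_even N (j + j') he' (by omega) (by omega)]
      ring
    · have ho' : Odd (j + j') := by
        rcases ho with ⟨t, ht⟩; exact ⟨j' + t, by omega⟩
      rw [cos_sum_odd N (j - j') ho, cos_sum_odd N (j + j') ho']
      ring

lemma sin_orth (N j j' : ℕ) (hj : 1 ≤ j) (hj2 : j ≤ N) (hj' : 1 ≤ j') (hj2' : j' ≤ N) :
    ∑ k ∈ Finset.range N,
        Real.sin ((k + 1) * (j * π / (N + 1))) * Real.sin ((k + 1) * (j' * π / (N + 1)))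
      = if j = j' then ((N : ℝ) + 1) / 2 else 0 := by
  rcases le_total j' j with h | h
  · exact sin_orth_aux N j j' hj' h hj2
  · have := sin_orth_aux N j' j hj h hj2'
    calc ∑ k ∈ Finset.range N,
        Real.sin ((k + 1) * (j * π / (N + 1))) * Real.sin ((k + 1) * (j' * π / (N + 1)))
        = ∑ k ∈ Finset.range N,
        Real.sin ((k + 1) * (j' * π / (N + 1))) * Real.sin ((k + 1) * (j * π / (N + 1))) := by
          exact Finset.sum_congr rfl fun k _ => by ring
      _ = if j' = j then ((N : ℝ) + 1) / 2 else 0 := this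
      _ = if j = j' then ((N : ℝ) + 1) / 2 else 0 := by
          by_cases hh : j = j' <;> simp [hh, eq_comm]

lemma sin_orth_odd (n l l' : ℕ) (hl : l < n) (hl' : l' < n) :
    ∑ k ∈ Finset.range n,
        Real.sin ((k + 1) * ((2 * l + 1) * π / (2 * n + 1)))
          * Real.sin ((k + 1) * ((2 * l' + 1) * π / (2 * n + 1)))
      = if l = l' then (2 * (n : ℝ) + 1) / 4 else 0 := by
  set h : ℕ → ℝ := fun k =>
    Real.sin ((k + 1) * ((2 * l + 1) * π / (2 * n + 1)))
      * Real.sin ((k + 1) * ((2 * l' + 1) * π / (2 * n + 1))) with hh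
  have hsin : ∀ (u t : ℕ), t ≤ 2 * n →
      Real.sin (((2 * n - t : ℕ) : ℝ) * ((2 * u + 1) * π / (2 * n + 1)))
        = Real.sin ((t + 1) * ((2 * u + 1) * π / (2 * n + 1))) := by
    intro u t ht
    have e : ((2 * n - t : ℕ) : ℝ) * ((2 * u + 1) * π / (2 * n + 1))
        = (2 * u + 1) * π - (t + 1) * ((2 * u + 1) * π / (2 * n + 1)) := by
      push_cast [ht]
      have hne : (2 * (n : ℝ) + 1) ≠ 0 := by positivity
      field_simp
      ring
    rw [e]
    have := sin_reflect' (2 * u) ((t + 1) * ((2 * u + 1) * π / (2 * n + 1)))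
    push_cast at this ⊢
    rw [this]
    simp [pow_mul]
  have hsym : ∀ t, t < n → h (2 * n - 1 - t) = h t := by
    intro t ht
    have e : (2 * n - 1 - t) + 1 = 2 * n - t := by omega
    rw [hh]
    simp only
    have e2 : ((2 * n - 1 - t : ℕ) : ℝ) + 1 = ((2 * n - t : ℕ) : ℝ) := by
      exact_mod_cast congrArg (Nat.cast (R := ℝ)) e
    rw [e2, hsin l t (by omega), hsin l' t (by omega)]
  have hdouble : ∑ k ∈ Finset.range (2 * n), h k = 2 * ∑ k ∈ Finset.range n, h k := by
    have h2n : 2 * n = n + n := by omega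
    rw [h2n, Finset.sum_range_add]
    have := Finset.sum_range_reflect (fun k => h (n + k)) n
    have h3 : ∑ k ∈ Finset.range n, h (n + (n - 1 - k)) = ∑ k ∈ Finset.range n, h k := by
      apply Finset.sum_congr rfl
      intro k hk
      rw [Finset.mem_range] at hk
      have e : n + (n - 1 - k) = 2 * n - 1 - k := by omega
      rw [e, hsym k hk]
    rw [← this, h3]; ring
  have hfull := sin_orth (2 * n) (2 * l + 1) (2 * l' + 1) (by omega) (by omega) (by omega) (by omega)
  have hcast : ∑ k ∈ Finset.range (2 * n), h k
      = if 2 * l + 1 = 2 * l' + 1 then (2 * (n : ℝ) + 1) / 2 else 0 := by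
    push_cast at hfull
    simp only [hh]
    convert hfull using 2
    omega
  by_cases hll : l = l'
  · subst hll
    rw [if_pos rfl] at hcast
    rw [if_pos rfl]
    show ∑ k ∈ Finset.range n, h k = (2 * (n : ℝ) + 1) / 4
    linarith [hdouble, hcast]
  · have hne : ¬ (2 * l + 1 = 2 * l' + 1) := by omega
    rw [if_neg hne] at hcast
    rw [hcast] at hdouble
    rw [if_neg hll]
    show ∑ k ∈ Finset.range n, h k = 0
    linarith [hdouble]


/-- the eigenvector matrix for a tridiagonal Toeplitz matrix. -/
noncomputable def VM (N : ℕ) : Matrix (Fin N) (Fin N) ℂ :=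
  Matrix.of fun k j => Complex.I ^ ((k : ℕ) + 1)
    * ((Real.sin (((k : ℕ) + 1) * (((j : ℕ) + 1) * π / (N + 1))) : ℝ) : ℂ)

/-- inverse of `VM`. -/
noncomputable def VMinv (N : ℕ) : Matrix (Fin N) (Fin N) ℂ :=
  Matrix.of fun j k => ((2 / ((N : ℝ) + 1) : ℝ) : ℂ) * (- Complex.I) ^ ((k : ℕ) + 1)
    * ((Real.sin (((k : ℕ) + 1) * (((j : ℕ) + 1) * π / (N + 1))) : ℝ) : ℂ)

lemma sum_ite_coe {N : ℕ} (t : ℕ) (f : Fin N → ℂ) :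
    (∑ s : Fin N, if (s : ℕ) = t then f s else 0) = if h : t < N then f ⟨t, h⟩ else 0 := by
  split_ifs with h
  · rw [Finset.sum_eq_single (⟨t, h⟩ : Fin N)]
    · simp
    · intro s _ hs
      rw [if_neg]
      intro hc
      exact hs (Fin.ext hc)
    · intro hs; exact absurd (Finset.mem_univ _) hs
  · apply Finset.sum_eq_zero
    intro s _
    rw [if_neg]
    intro hc
    exact h (hc ▸ s.isLt)

lemma orth_sum (N : ℕ) (u v : Fin N) :
    ∑ s : Fin N,
      ((Real.sin (((s : ℕ) + 1) * (((u : ℕ) + 1) * π / (N + 1))) : ℝ) : ℂ)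
        * ((Real.sin (((s : ℕ) + 1) * (((v : ℕ) + 1) * π / (N + 1))) : ℝ) : ℂ)
      = if u = v then (((N : ℝ) + 1) / 2 : ℝ) else 0 := by
  have h := sin_orth N ((u : ℕ) + 1) ((v : ℕ) + 1) (by omega) (by omega) (by omega) (by omega)
  push_cast at h
  have hcond : ((u : ℕ) = (v : ℕ)) ↔ u = v := ⟨Fin.ext, fun hc => by rw [hc]⟩
  have hre : ∑ s : Fin N,
      Real.sin (((s : ℕ) + 1) * (((u : ℕ) + 1) * π / (N + 1)))
        * Real.sin (((s : ℕ) + 1) * (((v : ℕ) + 1) * π / (N + 1)))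
      = if u = v then ((N : ℝ) + 1) / 2 else 0 := by
    rw [Fin.sum_univ_eq_sum_range (fun k =>
      Real.sin (((k : ℝ) + 1) * (((u : ℕ) + 1) * π / (N + 1)))
        * Real.sin (((k : ℝ) + 1) * (((v : ℕ) + 1) * π / (N + 1)))) N]
    rw [h]
    by_cases huv : u = v
    · rw [if_pos huv, if_pos (hcond.mpr huv)]
    · rw [if_neg huv, if_neg (fun hc => huv (hcond.mp hc))]
  -- done
  calc ∑ s : Fin N,
      ((Real.sin (((s : ℕ) + 1) * (((u : ℕ) + 1) * π / (N + 1))) : ℝ) : ℂ)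
        * ((Real.sin (((s : ℕ) + 1) * (((v : ℕ) + 1) * π / (N + 1))) : ℝ) : ℂ)
      = (((∑ s : Fin N,
          Real.sin (((s : ℕ) + 1) * (((u : ℕ) + 1) * π / (N + 1)))
            * Real.sin (((s : ℕ) + 1) * (((v : ℕ) + 1) * π / (N + 1))) : ℝ)) : ℂ) := by
        push_cast; try rfl
    _ = _ := by rw [hre]

lemma VM_mul_VMinv (N : ℕ) : VM N * VMinv N = 1 := by
  ext k k'
  rw [Matrix.mul_apply]
  have hpt : ∀ j : Fin N, VM N k j * VMinv N j k'
      = (((2 / ((N : ℝ) + 1) : ℝ) : ℂ) * (Complex.I ^ ((k : ℕ) + 1) * (- Complex.I) ^ ((k' : ℕ) + 1)))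
        * (((Real.sin (((j : ℕ) + 1) * (((k : ℕ) + 1) * π / (N + 1))) : ℝ) : ℂ)
          * ((Real.sin (((j : ℕ) + 1) * (((k' : ℕ) + 1) * π / (N + 1))) : ℝ) : ℂ)) := by
    intro j
    simp only [VM, VMinv, Matrix.of_apply]
    have e1 : (((k : ℕ) + 1 : ℝ)) * (((j : ℕ) + 1) * π / (N + 1))
        = (((j : ℕ) + 1 : ℝ)) * (((k : ℕ) + 1) * π / (N + 1)) := by ring
    have e2 : (((j : ℕ) + 1 : ℝ)) * (((k' : ℕ) + 1) * π / (N + 1))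
        = (((k' : ℕ) + 1 : ℝ)) * (((j : ℕ) + 1) * π / (N + 1)) := by ring
    rw [← e2]
    rw [e1]
    ring
  rw [Finset.sum_congr rfl (fun j _ => hpt j), ← Finset.mul_sum, orth_sum N k k']
  by_cases hkk : k = k'
  · subst hkk
    rw [if_pos rfl, Matrix.one_apply_eq]
    have hNnz : ((N : ℝ) + 1) ≠ 0 := by positivity
    have hphase : Complex.I ^ ((k : ℕ) + 1) * (- Complex.I) ^ ((k : ℕ) + 1) = 1 := by
      rw [← mul_pow]
      have : Complex.I * (- Complex.I) = 1 := by
        rw [mul_neg, Complex.I_mul_I]; ring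
      rw [this, one_pow]
    rw [hphase]
    have hNnzC : ((N : ℂ) + 1) ≠ 0 := by
      have h9 : ((N : ℝ) + 1) ≠ 0 := by positivity
      exact_mod_cast h9
    push_cast
    field_simp
  · simp [if_neg hkk, Matrix.one_apply_ne hkk]

lemma VMinv_mul_VM (N : ℕ) : VMinv N * VM N = 1 := by
  ext j j'
  rw [Matrix.mul_apply]
  have hpt : ∀ k : Fin N, VMinv N j k * VM N k j'
      = (((2 / ((N : ℝ) + 1) : ℝ) : ℂ))
        * (((Real.sin (((k : ℕ) + 1) * (((j : ℕ) + 1) * π / (N + 1))) : ℝ) : ℂ)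
          * ((Real.sin (((k : ℕ) + 1) * (((j' : ℕ) + 1) * π / (N + 1))) : ℝ) : ℂ)) := by
    intro k
    simp only [VM, VMinv, Matrix.of_apply]
    have hphase : (- Complex.I) ^ ((k : ℕ) + 1) * Complex.I ^ ((k : ℕ) + 1) = 1 := by
      rw [← mul_pow]
      have : (- Complex.I) * Complex.I = 1 := by
        rw [neg_mul, Complex.I_mul_I]; ring
      rw [this, one_pow]
    calc ((2 / ((N : ℝ) + 1) : ℝ) : ℂ) * (- Complex.I) ^ ((k : ℕ) + 1)
          * ((Real.sin (((k : ℕ) + 1) * (((j : ℕ) + 1) * π / (N + 1))) : ℝ) : ℂ)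
          * (Complex.I ^ ((k : ℕ) + 1)
            * ((Real.sin (((k : ℕ) + 1) * (((j' : ℕ) + 1) * π / (N + 1))) : ℝ) : ℂ))
        = ((2 / ((N : ℝ) + 1) : ℝ) : ℂ) * ((- Complex.I) ^ ((k : ℕ) + 1) * Complex.I ^ ((k : ℕ) + 1))
          * (((Real.sin (((k : ℕ) + 1) * (((j : ℕ) + 1) * π / (N + 1))) : ℝ) : ℂ)
            * ((Real.sin (((k : ℕ) + 1) * (((j' : ℕ) + 1) * π / (N + 1))) : ℝ) : ℂ)) := by ring
      _ = _ := by rw [hphase]; ring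
  rw [Finset.sum_congr rfl (fun k _ => hpt k), ← Finset.mul_sum, orth_sum N j j']
  by_cases hjj : j = j'
  · subst hjj
    rw [if_pos rfl, Matrix.one_apply_eq]
    have hNnzC : ((N : ℂ) + 1) ≠ 0 := by
      have h9 : ((N : ℝ) + 1) ≠ 0 := by positivity
      exact_mod_cast h9
    push_cast
    field_simp
  · simp [if_neg hjj, Matrix.one_apply_ne hjj]

lemma sum_tri (N : ℕ) (k : Fin N) (x a : ℂ) (F : ℕ → ℂ) (hF0 : F 0 = 0) :
    ∑ s : Fin N, triToeplitz N (-a) x a k s * F ((s : ℕ) + 1)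
      = x * F ((k : ℕ) + 1) + (if (k : ℕ) + 1 < N then a * F ((k : ℕ) + 2) else 0)
        - a * F (k : ℕ) := by
  by_cases hk : 1 ≤ (k : ℕ)
  · have hsplit : ∀ s : Fin N, triToeplitz N (-a) x a k s * F ((s : ℕ) + 1)
        = (if (s : ℕ) = (k : ℕ) then x * F ((s : ℕ) + 1) else 0)
          + ((if (s : ℕ) = (k : ℕ) + 1 then a * F ((s : ℕ) + 1) else 0)
            + (if (s : ℕ) = (k : ℕ) - 1 then -a * F ((s : ℕ) + 1) else 0)) := by
      intro s
      simp only [triToeplitz, Matrix.of_apply, Fin.ext_iff]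
      split_ifs <;> (first | ring1 | (exfalso; omega))
    rw [Finset.sum_congr rfl (fun s _ => hsplit s), Finset.sum_add_distrib,
      Finset.sum_add_distrib, sum_ite_coe, sum_ite_coe, sum_ite_coe]
    rw [dif_pos k.isLt]
    have e1 : (if h : (k : ℕ) + 1 < N then
        (fun s : Fin N => a * F ((s : ℕ) + 1)) ⟨(k : ℕ) + 1, h⟩ else 0)
        = (if (k : ℕ) + 1 < N then a * F ((k : ℕ) + 2) else 0) := by
      split_ifs <;> rfl
    have hkN : (k : ℕ) - 1 < N := by omega
    rw [e1, dif_pos hkN]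
    have e2 : ((⟨(k : ℕ) - 1, hkN⟩ : Fin N) : ℕ) + 1 = (k : ℕ) := by
      simp; omega
    rw [e2]
    ring
  · have hk0 : (k : ℕ) = 0 := by omega
    have hsplit : ∀ s : Fin N, triToeplitz N (-a) x a k s * F ((s : ℕ) + 1)
        = (if (s : ℕ) = (k : ℕ) then x * F ((s : ℕ) + 1) else 0)
          + (if (s : ℕ) = (k : ℕ) + 1 then a * F ((s : ℕ) + 1) else 0) := by
      intro s
      simp only [triToeplitz, Matrix.of_apply, Fin.ext_iff]
      split_ifs <;> (first | ring1 | (exfalso; omega))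
    rw [Finset.sum_congr rfl (fun s _ => hsplit s), Finset.sum_add_distrib,
      sum_ite_coe, sum_ite_coe]
    rw [dif_pos k.isLt]
    have e1 : (if h : (k : ℕ) + 1 < N then
        (fun s : Fin N => a * F ((s : ℕ) + 1)) ⟨(k : ℕ) + 1, h⟩ else 0)
        = (if (k : ℕ) + 1 < N then a * F ((k : ℕ) + 2) else 0) := by
      split_ifs <;> rfl
    rw [e1, hk0, hF0]
    ring

lemma stepg (θ : ℝ) (a : ℂ) (s : ℕ) :
    a * (Complex.I ^ (s + 2) * ((Real.sin (((s + 2 : ℕ) : ℝ) * θ) : ℝ) : ℂ))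
      - a * (Complex.I ^ s * ((Real.sin (((s : ℕ) : ℝ) * θ) : ℝ) : ℂ))
    = (2 * Complex.I * a * ((Real.cos θ : ℝ) : ℂ))
        * (Complex.I ^ (s + 1) * ((Real.sin (((s + 1 : ℕ) : ℝ) * θ) : ℝ) : ℂ)) := by
  have h1 : Real.sin (((s + 2 : ℕ) : ℝ) * θ) + Real.sin (((s : ℕ) : ℝ) * θ)
      = 2 * Real.cos θ * Real.sin (((s + 1 : ℕ) : ℝ) * θ) := by
    have e2 : ((s + 2 : ℕ) : ℝ) * θ = (((s + 1 : ℕ) : ℝ)) * θ + θ := by push_cast; ring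
    have e0 : ((s : ℕ) : ℝ) * θ = (((s + 1 : ℕ) : ℝ)) * θ - θ := by push_cast; ring
    rw [e2, e0, Real.sin_add, Real.sin_sub]
    ring
  have hcc : ((Real.sin (((s + 2 : ℕ) : ℝ) * θ) : ℝ) : ℂ) + ((Real.sin (((s : ℕ) : ℝ) * θ) : ℝ) : ℂ)
      = 2 * ((Real.cos θ : ℝ) : ℂ) * ((Real.sin (((s + 1 : ℕ) : ℝ) * θ) : ℝ) : ℂ) := by
    exact_mod_cast congrArg (Complex.ofReal) h1
  have hI2 : Complex.I ^ (s + 2) = -Complex.I ^ s := by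
    rw [pow_add, Complex.I_sq]; ring
  have hI1 : Complex.I ^ (s + 1) = Complex.I ^ s * Complex.I := pow_succ _ _
  rw [hI2, hI1]
  linear_combination (-a * Complex.I ^ s) * hcc
    - 2 * a * ((Real.cos θ : ℝ) : ℂ) * ((Real.sin (((s + 1 : ℕ) : ℝ) * θ) : ℝ) : ℂ)
        * Complex.I ^ s * Complex.I_sq

/-- diagonalization of the tridiagonal Toeplitz matrix. -/
lemma T_mul_VM (N : ℕ) (x a : ℝ) :
    triToeplitz N (-(a : ℂ)) (x : ℂ) (a : ℂ) * VM N
      = VM N * Matrix.diagonal (fun j : Fin N =>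
          (x : ℂ) + 2 * Complex.I * a * ((Real.cos (((j : ℕ) + 1) * π / (N + 1)) : ℝ) : ℂ)) := by
  ext k j
  rw [Matrix.mul_apply, Matrix.mul_diagonal]
  set θ : ℝ := ((j : ℕ) + 1) * π / (N + 1) with hθ
  set F : ℕ → ℂ := fun s => Complex.I ^ s * ((Real.sin ((s : ℝ) * θ) : ℝ) : ℂ) with hF
  have hF0 : F 0 = 0 := by simp [hF]
  have hVM : ∀ s : Fin N, VM N s j = F ((s : ℕ) + 1) := by
    intro s
    simp only [VM, Matrix.of_apply, hF, hθ]
    push_cast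
    ring_nf
  have hsum : ∑ s : Fin N, triToeplitz N (-(a : ℂ)) (x : ℂ) (a : ℂ) k s * VM N s j
      = ∑ s : Fin N, triToeplitz N (-(a : ℂ)) (x : ℂ) (a : ℂ) k s * F ((s : ℕ) + 1) :=
    Finset.sum_congr rfl fun s _ => by rw [hVM s]
  rw [hsum, sum_tri N k (x : ℂ) (a : ℂ) F hF0, hVM k]
  have hstep := stepg θ (a : ℂ) (k : ℕ)
  by_cases hkn : (k : ℕ) + 1 < N
  · rw [if_pos hkn]
    simp only [hF]
    linear_combination hstep
  · rw [if_neg hkn]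
    have hFN : F ((k : ℕ) + 2) = 0 := by
      have e : (((k : ℕ) + 2 : ℕ) : ℝ) * θ = ((j : ℕ) + 1) * π := by
        rw [hθ]
        have hNnz : ((N : ℝ) + 1) ≠ 0 := by positivity
        have e9 : (((k : ℕ) + 2 : ℕ) : ℝ) = (N : ℝ) + 1 := by
          exact_mod_cast congrArg (Nat.cast (R := ℝ)) (by omega : (k : ℕ) + 2 = N + 1)
        rw [e9]
        field_simp
      simp only [hF]
      rw [e]
      have hs : Real.sin (((j : ℕ) + 1) * π) = 0 := by
        have h8 := Real.sin_nat_mul_pi ((j : ℕ) + 1)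
        push_cast at h8
        exact h8
      rw [hs]
      simp
    have hz : (a : ℂ) * F ((k : ℕ) + 2) = 0 := by rw [hFN, mul_zero]
    simp only [hF] at hz ⊢
    linear_combination hstep - hz

/-- signed reversal matrix. -/
noncomputable def Wsig (N : ℕ) : Matrix (Fin N) (Fin N) ℂ :=
  Matrix.of fun s j => if (s : ℕ) + (j : ℕ) + 1 = N
    then Complex.I ^ (N - 1) * (-1 : ℂ) ^ (j : ℕ) else 0

lemma I_phase (N k : ℕ) (hk : k < N) :
    Complex.I ^ (k + 1) * (-1 : ℂ) ^ k * Complex.I ^ (N - 1) = Complex.I ^ (N - k) := by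
  have h1 : (-1 : ℂ) ^ k = (Complex.I ^ 2) ^ k := by rw [Complex.I_sq]
  rw [h1, ← pow_mul, ← pow_add, ← pow_add]
  have h2 : k + 1 + 2 * k + (N - 1) = (N - k) + 4 * k := by omega
  rw [h2, pow_add, pow_mul, Complex.I_pow_four, one_pow, mul_one]

lemma J_mul_VM (N : ℕ) : antiDiagOnes N * VM N = VM N * Wsig N := by
  ext k j
  rw [Matrix.mul_apply, Matrix.mul_apply]
  have hL : ∀ s : Fin N, antiDiagOnes N k s * VM N s j
      = if (s : ℕ) = N - 1 - (k : ℕ) then VM N s j else 0 := by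
    intro s
    simp only [antiDiagOnes, Matrix.of_apply]
    split_ifs <;> (first | ring1 | (exfalso; omega))
  have hR : ∀ s : Fin N, VM N k s * Wsig N s j
      = if (s : ℕ) = N - 1 - (j : ℕ) then
          VM N k s * (Complex.I ^ (N - 1) * (-1 : ℂ) ^ (j : ℕ)) else 0 := by
    intro s
    simp only [Wsig, Matrix.of_apply]
    split_ifs <;> (first | ring1 | (exfalso; omega))
  rw [Finset.sum_congr rfl (fun s _ => hL s), Finset.sum_congr rfl (fun s _ => hR s),
    sum_ite_coe, sum_ite_coe]
  have hkN : N - 1 - (k : ℕ) < N := by have := k.isLt; omega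
  have hjN : N - 1 - (j : ℕ) < N := by have := j.isLt; omega
  rw [dif_pos hkN, dif_pos hjN]
  simp only [VM, Matrix.of_apply]
  have ek : (N - 1 - (k : ℕ)) + 1 = N - (k : ℕ) := by have := k.isLt; omega
  have ej : (N - 1 - (j : ℕ)) + 1 = N - (j : ℕ) := by have := j.isLt; omega
  have ekR : ((N - 1 - (k : ℕ) : ℕ) : ℝ) + 1 = ((N - (k : ℕ) : ℕ) : ℝ) := by
    exact_mod_cast congrArg (Nat.cast (R := ℝ)) ek
  have ejR : ((N - 1 - (j : ℕ) : ℕ) : ℝ) + 1 = ((N - (j : ℕ) : ℕ) : ℝ) := by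
    exact_mod_cast congrArg (Nat.cast (R := ℝ)) ej
  rw [ek, ekR, ejR]
  have hks : (k : ℕ) ≤ N := le_of_lt k.isLt
  have hjs : (j : ℕ) ≤ N := le_of_lt j.isLt
  have hNnz : ((N : ℝ) + 1) ≠ 0 := by positivity
  have hsinL : Real.sin (((N - (k : ℕ) : ℕ) : ℝ) * (((j : ℕ) + 1) * π / (N + 1)))
      = (-1 : ℝ) ^ (j : ℕ) * Real.sin (((k : ℕ) + 1) * (((j : ℕ) + 1) * π / (N + 1))) := by
    have e : ((N - (k : ℕ) : ℕ) : ℝ) * (((j : ℕ) + 1) * π / (N + 1))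
        = (((j : ℕ)) + 1) * π - ((k : ℕ) + 1) * (((j : ℕ) + 1) * π / (N + 1)) := by
      push_cast [hks]
      field_simp
      ring
    rw [e, sin_reflect']
  have hsinR : Real.sin (((k : ℕ) + 1) * (((N - (j : ℕ) : ℕ) : ℝ) * π / (N + 1)))
      = (-1 : ℝ) ^ (k : ℕ) * Real.sin (((k : ℕ) + 1) * (((j : ℕ) + 1) * π / (N + 1))) := by
    have e : ((k : ℕ) + 1 : ℝ) * (((N - (j : ℕ) : ℕ) : ℝ) * π / (N + 1))
        = (((k : ℕ)) + 1) * π - ((k : ℕ) + 1) * (((j : ℕ) + 1) * π / (N + 1)) := by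
      push_cast [hjs]
      field_simp
      ring
    rw [e, sin_reflect']
  rw [hsinL, hsinR]
  simp only [Complex.ofReal_mul, Complex.ofReal_pow, Complex.ofReal_neg, Complex.ofReal_one]
  linear_combination (-(-1 : ℂ) ^ (j : ℕ)
      * ((Real.sin (((k : ℕ) + 1) * (((j : ℕ) + 1) * π / (N + 1))) : ℝ) : ℂ))
    * I_phase N (k : ℕ) k.isLt


/-- eigenvector matrix for the corner-modified matrix. -/
noncomputable def UM (n : ℕ) : Matrix (Fin n) (Fin n) ℂ :=
  Matrix.of fun k l => Complex.I ^ ((k : ℕ) + 1)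
    * ((Real.sin (((k : ℕ) + 1) * ((2 * (l : ℕ) + 1) * π / (2 * n + 1))) : ℝ) : ℂ)

noncomputable def UMinv (n : ℕ) : Matrix (Fin n) (Fin n) ℂ :=
  Matrix.of fun l k => ((4 / (2 * (n : ℝ) + 1) : ℝ) : ℂ) * (- Complex.I) ^ ((k : ℕ) + 1)
    * ((Real.sin (((k : ℕ) + 1) * ((2 * (l : ℕ) + 1) * π / (2 * n + 1))) : ℝ) : ℂ)

lemma orth_sum_odd (n : ℕ) (u v : Fin n) :
    ∑ s : Fin n,
      ((Real.sin (((s : ℕ) + 1) * ((2 * (u : ℕ) + 1) * π / (2 * n + 1))) : ℝ) : ℂ)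
        * ((Real.sin (((s : ℕ) + 1) * ((2 * (v : ℕ) + 1) * π / (2 * n + 1))) : ℝ) : ℂ)
      = if u = v then ((2 * (n : ℝ) + 1) / 4 : ℝ) else 0 := by
  have h := sin_orth_odd n (u : ℕ) (v : ℕ) u.isLt v.isLt
  have hcond : ((u : ℕ) = (v : ℕ)) ↔ u = v := ⟨Fin.ext, fun hc => by rw [hc]⟩
  have hre : ∑ s : Fin n,
      Real.sin (((s : ℕ) + 1) * ((2 * (u : ℕ) + 1) * π / (2 * n + 1)))
        * Real.sin (((s : ℕ) + 1) * ((2 * (v : ℕ) + 1) * π / (2 * n + 1)))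
      = if u = v then (2 * (n : ℝ) + 1) / 4 else 0 := by
    rw [Fin.sum_univ_eq_sum_range (fun k =>
      Real.sin (((k : ℝ) + 1) * ((2 * (u : ℕ) + 1) * π / (2 * n + 1)))
        * Real.sin (((k : ℝ) + 1) * ((2 * (v : ℕ) + 1) * π / (2 * n + 1)))) n]
    rw [h]
    by_cases huv : u = v
    · rw [if_pos huv, if_pos (hcond.mpr huv)]
    · rw [if_neg huv, if_neg (fun hc => huv (hcond.mp hc))]
  calc ∑ s : Fin n,
      ((Real.sin (((s : ℕ) + 1) * ((2 * (u : ℕ) + 1) * π / (2 * n + 1))) : ℝ) : ℂ)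
        * ((Real.sin (((s : ℕ) + 1) * ((2 * (v : ℕ) + 1) * π / (2 * n + 1))) : ℝ) : ℂ)
      = (((∑ s : Fin n,
          Real.sin (((s : ℕ) + 1) * ((2 * (u : ℕ) + 1) * π / (2 * n + 1)))
            * Real.sin (((s : ℕ) + 1) * ((2 * (v : ℕ) + 1) * π / (2 * n + 1))) : ℝ)) : ℂ) := by
        push_cast; try rfl
    _ = _ := by rw [hre]

lemma UMinv_mul_UM (n : ℕ) : UMinv n * UM n = 1 := by
  ext j j'
  rw [Matrix.mul_apply]
  have hpt : ∀ k : Fin n, UMinv n j k * UM n k j'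
      = (((4 / (2 * (n : ℝ) + 1) : ℝ) : ℂ))
        * (((Real.sin (((k : ℕ) + 1) * ((2 * (j : ℕ) + 1) * π / (2 * n + 1))) : ℝ) : ℂ)
          * ((Real.sin (((k : ℕ) + 1) * ((2 * (j' : ℕ) + 1) * π / (2 * n + 1))) : ℝ) : ℂ)) := by
    intro k
    simp only [UM, UMinv, Matrix.of_apply]
    have hphase : (- Complex.I) ^ ((k : ℕ) + 1) * Complex.I ^ ((k : ℕ) + 1) = 1 := by
      rw [← mul_pow]
      have h9 : (- Complex.I) * Complex.I = 1 := by
        rw [neg_mul, Complex.I_mul_I]; ring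
      rw [h9, one_pow]
    calc ((4 / (2 * (n : ℝ) + 1) : ℝ) : ℂ) * (- Complex.I) ^ ((k : ℕ) + 1)
          * ((Real.sin (((k : ℕ) + 1) * ((2 * (j : ℕ) + 1) * π / (2 * n + 1))) : ℝ) : ℂ)
          * (Complex.I ^ ((k : ℕ) + 1)
            * ((Real.sin (((k : ℕ) + 1) * ((2 * (j' : ℕ) + 1) * π / (2 * n + 1))) : ℝ) : ℂ))
        = ((4 / (2 * (n : ℝ) + 1) : ℝ) : ℂ) * ((- Complex.I) ^ ((k : ℕ) + 1) * Complex.I ^ ((k : ℕ) + 1))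
          * (((Real.sin (((k : ℕ) + 1) * ((2 * (j : ℕ) + 1) * π / (2 * n + 1))) : ℝ) : ℂ)
            * ((Real.sin (((k : ℕ) + 1) * ((2 * (j' : ℕ) + 1) * π / (2 * n + 1))) : ℝ) : ℂ)) := by ring
      _ = _ := by rw [hphase]; ring
  rw [Finset.sum_congr rfl (fun k _ => hpt k), ← Finset.mul_sum, orth_sum_odd n j j']
  by_cases hjj : j = j'
  · subst hjj
    rw [if_pos rfl, Matrix.one_apply_eq]
    have hNnzC : (2 * (n : ℂ) + 1) ≠ 0 := by
      have h9 : (2 * (n : ℝ) + 1) ≠ 0 := by positivity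
      exact_mod_cast h9
    push_cast
    field_simp
  · simp [if_neg hjj, Matrix.one_apply_ne hjj]

lemma UM_mul_UMinv (n : ℕ) : UM n * UMinv n = 1 :=
  mul_eq_one_comm.mp (UMinv_mul_UM n)

/-- eigen-equation for the corner-modified matrix. -/
lemma S1_mul_UM (n : ℕ) (b : ℝ) :
    (triToeplitz n (-(b : ℂ)) 0 (b : ℂ) + (Complex.I * (b : ℂ)) • cornerOne n) * UM n
      = UM n * Matrix.diagonal (fun l : Fin n =>
          2 * Complex.I * b * ((Real.cos ((2 * (l : ℕ) + 1) * π / (2 * n + 1)) : ℝ) : ℂ)) := by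
  ext k l
  rw [Matrix.mul_apply, Matrix.mul_diagonal]
  set θ : ℝ := (2 * (l : ℕ) + 1) * π / (2 * n + 1) with hθ
  set F : ℕ → ℂ := fun s => Complex.I ^ s * ((Real.sin ((s : ℝ) * θ) : ℝ) : ℂ) with hF
  have hF0 : F 0 = 0 := by simp [hF]
  have hUM : ∀ s : Fin n, UM n s l = F ((s : ℕ) + 1) := by
    intro s
    simp only [UM, Matrix.of_apply, hF, hθ]
    push_cast
    ring_nf
  have hpt : ∀ s : Fin n,
      (triToeplitz n (-(b : ℂ)) 0 (b : ℂ) + (Complex.I * (b : ℂ)) • cornerOne n) k s * UM n s l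
        = triToeplitz n (-(b : ℂ)) 0 (b : ℂ) k s * F ((s : ℕ) + 1)
          + (if (k : ℕ) = n - 1 then (if (s : ℕ) = n - 1 then Complex.I * b * F ((s : ℕ) + 1) else 0) else 0) := by
    intro s
    rw [Matrix.add_apply, Matrix.smul_apply, hUM s]
    simp only [cornerOne, Matrix.of_apply, smul_eq_mul]
    split_ifs <;> (first | ring1 | (exfalso; omega) | (simp_all; try ring1))
  rw [Finset.sum_congr rfl (fun s _ => hpt s), Finset.sum_add_distrib,
    sum_tri n k 0 (b : ℂ) F hF0, hUM k]
  have hcorner : ∑ s : Fin n,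
      (if (k : ℕ) = n - 1 then (if (s : ℕ) = n - 1 then Complex.I * b * F ((s : ℕ) + 1) else 0) else 0)
      = if (k : ℕ) = n - 1 then Complex.I * b * F ((k : ℕ) + 1) else 0 := by
    by_cases hkk : (k : ℕ) = n - 1
    · simp only [if_pos hkk]
      rw [sum_ite_coe (n - 1) (fun s : Fin n => Complex.I * b * F ((s : ℕ) + 1))]
      have hlt : n - 1 < n := by have := k.isLt; omega
      rw [dif_pos hlt]
      have : ((⟨n - 1, hlt⟩ : Fin n) : ℕ) + 1 = (k : ℕ) + 1 := by simp [hkk]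
      rw [this]
    · simp only [if_neg hkk]
      exact Finset.sum_const_zero
  rw [hcorner]
  have hstep := stepg θ (b : ℂ) (k : ℕ)
  by_cases hkn : (k : ℕ) + 1 < n
  · rw [if_pos hkn, if_neg (by omega : ¬ (k : ℕ) = n - 1)]
    simp only [hF]
    linear_combination hstep
  · have hk1 : (k : ℕ) + 1 = n := by have := k.isLt; omega
    rw [if_neg hkn, if_pos (by omega : (k : ℕ) = n - 1)]
    have hs2 : Real.sin ((((k : ℕ) + 2 : ℕ) : ℝ) * θ) = Real.sin ((((k : ℕ) + 1 : ℕ) : ℝ) * θ) := by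
      have e : (((k : ℕ) + 2 : ℕ) : ℝ) * θ = (2 * (l : ℕ) + 1) * π - (((k : ℕ) + 1 : ℕ) : ℝ) * θ := by
        rw [hθ]
        have h1 : ((k : ℕ) : ℝ) + 2 = (n : ℝ) + 1 := by
          exact_mod_cast congrArg (Nat.cast (R := ℝ)) (by omega : (k : ℕ) + 2 = n + 1)
        have h2 : ((k : ℕ) : ℝ) + 1 = (n : ℝ) := by
          exact_mod_cast congrArg (Nat.cast (R := ℝ)) hk1
        push_cast
        rw [h1, h2]
        have hNnz : (2 * (n : ℝ) + 1) ≠ 0 := by positivity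
        field_simp
        ring
      have e2 : (2 * (l : ℕ) + 1 : ℝ) * π = ((2 * (l : ℕ) : ℕ) + 1 : ℝ) * π := by push_cast; ring
      rw [e, e2, sin_reflect']
      rw [pow_mul, neg_one_sq, one_pow, one_mul]
    have hs2c : ((Real.sin ((((k : ℕ) + 2 : ℕ) : ℝ) * θ) : ℝ) : ℂ)
        = ((Real.sin ((((k : ℕ) + 1 : ℕ) : ℝ) * θ) : ℝ) : ℂ) := by
      exact_mod_cast congrArg (Complex.ofReal) hs2
    simp only [hF]
    linear_combination hstep - ((b : ℂ) * Complex.I ^ ((k : ℕ) + 2)) * hs2c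


lemma det_units_conj {n : Type*} [Fintype n] [DecidableEq n]
    (M Q Qi G : Matrix n n ℂ) (h1 : M * Q = Q * G) (h2 : Q * Qi = 1) :
    M.det = G.det := by
  have hQQi : Q.det * Qi.det = 1 := by rw [← Matrix.det_mul, h2, Matrix.det_one]
  have hM : M = Q * G * Qi := by
    calc M = M * (Q * Qi) := by rw [h2, Matrix.mul_one]
      _ = (M * Q) * Qi := by rw [Matrix.mul_assoc]
      _ = Q * G * Qi := by rw [h1]
  rw [hM, Matrix.det_mul, Matrix.det_mul]
  calc Q.det * G.det * Qi.det = G.det * (Q.det * Qi.det) := by ring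
    _ = G.det := by rw [hQQi, mul_one]

lemma det_smul_one_sub_sq (S U Ui : Matrix (Fin p) (Fin p) ℂ) (μ : Fin p → ℂ)
    (hSU : S * U = U * Matrix.diagonal μ) (h1 : U * Ui = 1) (h2 : Ui * U = 1) (z : ℂ) :
    (z • (1 : Matrix (Fin p) (Fin p) ℂ) - S * S).det = ∏ l, (z - μ l ^ 2) := by
  have hS : S = U * Matrix.diagonal μ * Ui := by
    calc S = S * (U * Ui) := by rw [h1, Matrix.mul_one]
      _ = (S * U) * Ui := by rw [Matrix.mul_assoc]
      _ = U * Matrix.diagonal μ * Ui := by rw [hSU]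
  have hSS : S * S = U * Matrix.diagonal (fun l => μ l ^ 2) * Ui := by
    rw [hS]
    calc (U * Matrix.diagonal μ * Ui) * (U * Matrix.diagonal μ * Ui)
        = U * Matrix.diagonal μ * (Ui * U) * Matrix.diagonal μ * Ui := by
          simp only [Matrix.mul_assoc]
      _ = U * (Matrix.diagonal μ * Matrix.diagonal μ) * Ui := by
          rw [h2]; simp only [Matrix.mul_assoc, Matrix.mul_one, Matrix.one_mul]
      _ = U * Matrix.diagonal (fun l => μ l ^ 2) * Ui := by
          rw [Matrix.diagonal_mul_diagonal]
          congr 1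
          · congr 1
            funext l
            ring
  have hZ : z • (1 : Matrix (Fin p) (Fin p) ℂ) - S * S
      = U * Matrix.diagonal (fun l => z - μ l ^ 2) * Ui := by
    have hid : z • (1 : Matrix (Fin p) (Fin p) ℂ) = U * (z • (1 : Matrix (Fin p) (Fin p) ℂ)) * Ui := by
      rw [Matrix.mul_smul, Matrix.mul_one, Matrix.smul_mul, h1]
    rw [hSS]
    rw [Matrix.smul_one_eq_diagonal] at hid ⊢
    rw [hid]
    rw [← Matrix.sub_mul, ← Matrix.mul_sub, Matrix.diagonal_sub]
  rw [hZ, Matrix.det_mul, Matrix.det_mul, Matrix.det_diagonal]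
  have hQQi : U.det * Ui.det = 1 := by rw [← Matrix.det_mul, h1, Matrix.det_one]
  calc U.det * (∏ l, (z - μ l ^ 2)) * Ui.det
      = (∏ l, (z - μ l ^ 2)) * (U.det * Ui.det) := by ring
    _ = _ := by rw [hQQi, mul_one]

lemma det_swap_blocks (B C : Matrix (Fin p) (Fin p) ℂ) :
    (Matrix.fromBlocks 0 B C 0).det = (-1) ^ p * B.det * C.det := by
  have hP : (Matrix.fromBlocks (0 : Matrix (Fin p) (Fin p) ℂ)
        (1 : Matrix (Fin p) (Fin p) ℂ) (1 : Matrix (Fin p) (Fin p) ℂ)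
        (0 : Matrix (Fin p) (Fin p) ℂ))
      = Matrix.fromBlocks (1 : Matrix (Fin p) (Fin p) ℂ) 1 0 1
        * Matrix.fromBlocks (1 : Matrix (Fin p) (Fin p) ℂ) 0 (-1) 1
        * Matrix.fromBlocks (1 : Matrix (Fin p) (Fin p) ℂ) 1 0 1
        * Matrix.fromBlocks (-1 : Matrix (Fin p) (Fin p) ℂ) 0 0 1 := by
    simp only [Matrix.fromBlocks_multiply]
    norm_num
  have hdetP : (Matrix.fromBlocks (0 : Matrix (Fin p) (Fin p) ℂ)
      (1 : Matrix (Fin p) (Fin p) ℂ) (1 : Matrix (Fin p) (Fin p) ℂ)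
      (0 : Matrix (Fin p) (Fin p) ℂ)).det = (-1) ^ p := by
    rw [hP]
    simp [Matrix.det_mul, Matrix.det_fromBlocks_zero₂₁, Matrix.det_fromBlocks_zero₁₂,
      Matrix.det_neg]
  have hBC : Matrix.fromBlocks (0 : Matrix (Fin p) (Fin p) ℂ) B C 0
      = Matrix.fromBlocks B 0 0 C * Matrix.fromBlocks (0 : Matrix (Fin p) (Fin p) ℂ)
          (1 : Matrix (Fin p) (Fin p) ℂ) (1 : Matrix (Fin p) (Fin p) ℂ) 0 := by
    simp only [Matrix.fromBlocks_multiply]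
    norm_num
  rw [hBC, Matrix.det_mul, hdetP, Matrix.det_fromBlocks_zero₂₁]
  ring

lemma smul_mul_smul_mat (a b : ℂ) (X Y : Matrix (Fin p) (Fin p) ℂ) :
    (a • X) * (b • Y) = (a * b) • (X * Y) := by
  rw [Matrix.smul_mul, Matrix.mul_smul, smul_smul]

lemma det_scalar_blocks (α β γ δ : ℂ) (S : Matrix (Fin p) (Fin p) ℂ) :
    (Matrix.fromBlocks (α • (1 : Matrix (Fin p) (Fin p) ℂ)) (β • S) (γ • S)
      (δ • (1 : Matrix (Fin p) (Fin p) ℂ))).det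
    = ((α * δ) • (1 : Matrix (Fin p) (Fin p) ℂ) - (β * γ) • (S * S)).det := by
  by_cases hδ : δ ≠ 0
  · have hTL : α • (1 : Matrix (Fin p) (Fin p) ℂ) * (δ • (1 : Matrix (Fin p) (Fin p) ℂ))
        + β • S * ((-γ) • S)
        = (α * δ) • (1 : Matrix (Fin p) (Fin p) ℂ) - (β * γ) • (S * S) := by
      rw [smul_mul_smul_mat, smul_mul_smul_mat, Matrix.one_mul,
        show β * -γ = -(β * γ) by ring, neg_smul, ← sub_eq_add_neg]
    have hTR : α • (1 : Matrix (Fin p) (Fin p) ℂ) * 0 + β • S * 1 = β • S := by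
      rw [Matrix.mul_zero, Matrix.mul_one, zero_add]
    have hBL : γ • S * (δ • (1 : Matrix (Fin p) (Fin p) ℂ))
        + δ • (1 : Matrix (Fin p) (Fin p) ℂ) * ((-γ) • S) = 0 := by
      rw [smul_mul_smul_mat, smul_mul_smul_mat, Matrix.mul_one, Matrix.one_mul,
        show δ * -γ = -(γ * δ) by ring, neg_smul, add_neg_cancel]
    have hBR : γ • S * 0 + δ • (1 : Matrix (Fin p) (Fin p) ℂ) * 1
        = δ • (1 : Matrix (Fin p) (Fin p) ℂ) := by
      rw [Matrix.mul_zero, Matrix.mul_one, zero_add]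
    have hME : Matrix.fromBlocks (α • (1 : Matrix (Fin p) (Fin p) ℂ)) (β • S) (γ • S)
          (δ • (1 : Matrix (Fin p) (Fin p) ℂ))
        * Matrix.fromBlocks (δ • (1 : Matrix (Fin p) (Fin p) ℂ)) 0 ((-γ) • S) 1
        = Matrix.fromBlocks
          ((α * δ) • (1 : Matrix (Fin p) (Fin p) ℂ) - (β * γ) • (S * S)) (β • S) 0
          (δ • (1 : Matrix (Fin p) (Fin p) ℂ)) := by
      rw [Matrix.fromBlocks_multiply, hTL, hTR, hBL, hBR]
    have h1 := congrArg Matrix.det hME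
    rw [Matrix.det_mul, Matrix.det_fromBlocks_zero₂₁,
      Matrix.det_fromBlocks_zero₁₂, Matrix.det_one, mul_one] at h1
    have hdet1 : (δ • (1 : Matrix (Fin p) (Fin p) ℂ)).det = δ ^ p := by
      simp [Matrix.det_smul]
    rw [hdet1] at h1
    exact mul_right_cancel₀ (pow_ne_zero p hδ) (by linear_combination h1)
  · push_neg at hδ
    subst hδ
    by_cases hα : α ≠ 0
    · have hTL : α • (1 : Matrix (Fin p) (Fin p) ℂ) * 1 + β • S * 0
          = α • (1 : Matrix (Fin p) (Fin p) ℂ) := by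
        rw [Matrix.mul_zero, Matrix.mul_one, add_zero]
      have hTR : α • (1 : Matrix (Fin p) (Fin p) ℂ) * ((-β) • S)
          + β • S * (α • (1 : Matrix (Fin p) (Fin p) ℂ)) = 0 := by
        rw [smul_mul_smul_mat, smul_mul_smul_mat, Matrix.one_mul, Matrix.mul_one,
          show α * -β = -(β * α) by ring, neg_smul, neg_add_cancel]
      have hBL : γ • S * 1 + (0 : ℂ) • (1 : Matrix (Fin p) (Fin p) ℂ) * 0 = γ • S := by
        rw [Matrix.mul_zero, Matrix.mul_one, add_zero]
      have hBR : γ • S * ((-β) • S)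
          + (0 : ℂ) • (1 : Matrix (Fin p) (Fin p) ℂ) * (α • (1 : Matrix (Fin p) (Fin p) ℂ))
          = (α * 0) • (1 : Matrix (Fin p) (Fin p) ℂ) - (β * γ) • (S * S) := by
        rw [smul_mul_smul_mat, smul_mul_smul_mat, Matrix.one_mul,
          show γ * -β = -(β * γ) by ring, neg_smul,
          show (0 : ℂ) * α = α * 0 by ring, neg_add_eq_sub]
      have hME : Matrix.fromBlocks (α • (1 : Matrix (Fin p) (Fin p) ℂ)) (β • S) (γ • S)
            ((0 : ℂ) • (1 : Matrix (Fin p) (Fin p) ℂ))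
          * Matrix.fromBlocks (1 : Matrix (Fin p) (Fin p) ℂ) ((-β) • S) 0
            (α • (1 : Matrix (Fin p) (Fin p) ℂ))
          = Matrix.fromBlocks (α • (1 : Matrix (Fin p) (Fin p) ℂ)) 0 (γ • S)
            ((α * 0) • (1 : Matrix (Fin p) (Fin p) ℂ) - (β * γ) • (S * S)) := by
        rw [Matrix.fromBlocks_multiply, hTL, hTR, hBL, hBR]
      have h1 := congrArg Matrix.det hME
      rw [Matrix.det_mul, Matrix.det_fromBlocks_zero₁₂,
        Matrix.det_fromBlocks_zero₂₁, Matrix.det_one, one_mul] at h1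
      have hdet1 : (α • (1 : Matrix (Fin p) (Fin p) ℂ)).det = α ^ p := by
        simp [Matrix.det_smul]
      rw [hdet1] at h1
      exact mul_left_cancel₀ (pow_ne_zero p hα) (by linear_combination h1)
    · push_neg at hα
      subst hα
      rw [zero_smul, det_swap_blocks, mul_zero, zero_smul, zero_sub,
        Matrix.det_neg, Matrix.det_smul, Matrix.det_smul, Matrix.det_smul, Matrix.det_mul]
      simp only [Fintype.card_fin]
      ring


/-- pairing equivalence grouping antidiagonal partners. -/
def pairEquiv (p m : ℕ) : (Fin p × Fin (2 * m)) ≃ ((Fin p ⊕ Fin p) × Fin m) where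
  toFun rj :=
    if h : (rj.2 : ℕ) < m then (Sum.inl rj.1, ⟨(rj.2 : ℕ), h⟩)
    else (Sum.inr rj.1, ⟨2 * m - 1 - (rj.2 : ℕ), by have := rj.2.isLt; omega⟩)
  invFun st :=
    match st with
    | (Sum.inl r, t) => (r, ⟨(t : ℕ), by have := t.isLt; omega⟩)
    | (Sum.inr r, t) => (r, ⟨2 * m - 1 - (t : ℕ), by have := t.isLt; omega⟩)
  left_inv := by
    rintro ⟨r, j⟩
    have hj := j.isLt
    by_cases h : (j : ℕ) < m
    · simp only [dif_pos h]
    · simp only [dif_neg h]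
      exact Prod.ext rfl (Fin.ext (by simp only [Fin.val_mk]; omega))
  right_inv := by
    rintro ⟨r | r, t⟩ <;> have ht := t.isLt
    · simp only []
      rw [dif_pos (by simp only [Fin.val_mk]; omega : ((⟨(t : ℕ), by omega⟩ : Fin (2 * m)) : ℕ) < m)]
    · simp only []
      rw [dif_neg (by simp only [Fin.val_mk]; omega : ¬ ((⟨2 * m - 1 - (t : ℕ), by omega⟩ : Fin (2 * m)) : ℕ) < m)]
      refine Prod.ext rfl (Fin.ext ?_)
      simp only [Fin.val_mk]
      omega

lemma neg_pow_flip (u v w : ℕ) (h : u + v = 2 * w + 1) :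
    ((-1 : ℂ)) ^ u = (-1) ^ (v + 1) := by
  have h1 : (-1 : ℂ) ^ u * (-1) ^ v = -1 := by
    rw [← pow_add, h, pow_succ, pow_mul, neg_one_sq, one_pow, one_mul]
  have h2 : (-1 : ℂ) ^ (v + 1) * (-1) ^ v = -1 := by
    rw [← pow_add, show v + 1 + v = 2 * v + 1 by omega, pow_succ, pow_mul, neg_one_sq,
      one_pow, one_mul]
  exact mul_right_cancel₀ (pow_ne_zero _ (by norm_num : (-1 : ℂ) ≠ 0)) (h1.trans h2.symm)

lemma cos_pair (m j : ℕ) (hm : 1 ≤ m) (hj : m ≤ j) (hj2 : j < 2 * m) :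
    Real.cos ((((2 * m - 1 - j : ℕ) : ℝ) + 1) * π / (((2 * m : ℕ) : ℝ) + 1))
      = - Real.cos ((((j : ℕ) : ℝ) + 1) * π / (((2 * m : ℕ) : ℝ) + 1)) := by
  have hle : j ≤ 2 * m := by omega
  have e1 : ((2 * m - 1 - j : ℕ) : ℝ) + 1 = 2 * (m : ℝ) - j := by
    have h0 : (2 * m - 1 - j) + 1 = 2 * m - j := by omega
    calc ((2 * m - 1 - j : ℕ) : ℝ) + 1 = ((2 * m - 1 - j + 1 : ℕ) : ℝ) := by push_cast; ring
      _ = ((2 * m - j : ℕ) : ℝ) := by rw [h0]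
      _ = 2 * (m : ℝ) - j := by rw [Nat.cast_sub hle]; push_cast; ring
  have hden : ((2 * m : ℕ) : ℝ) + 1 ≠ 0 := by positivity
  have e2 : (2 * (m : ℝ) - j) * π / (((2 * m : ℕ) : ℝ) + 1)
      = π - (((j : ℕ) : ℝ) + 1) * π / (((2 * m : ℕ) : ℝ) + 1) := by
    push_cast at hden ⊢
    field_simp
    ring
  rw [e1, e2, Real.cos_pi_sub]

lemma master_conj (N p : ℕ) (x a : ℝ) (S : Matrix (Fin p) (Fin p) ℂ) :
    ((1 : Matrix (Fin p) (Fin p) ℂ) ⊗ₖ triToeplitz N (-(a : ℂ)) (x : ℂ) (a : ℂ)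
        + S ⊗ₖ antiDiagOnes N).det
    = ((1 : Matrix (Fin p) (Fin p) ℂ) ⊗ₖ Matrix.diagonal (fun j : Fin N =>
          (x : ℂ) + 2 * Complex.I * a * ((Real.cos (((j : ℕ) + 1) * π / (N + 1)) : ℝ) : ℂ))
        + S ⊗ₖ Wsig N).det := by
  apply det_units_conj _ ((1 : Matrix (Fin p) (Fin p) ℂ) ⊗ₖ VM N)
    ((1 : Matrix (Fin p) (Fin p) ℂ) ⊗ₖ VMinv N)
  · rw [Matrix.add_mul, Matrix.mul_add]
    congr 1
    · calc (1 : Matrix (Fin p) (Fin p) ℂ) ⊗ₖ triToeplitz N (-(a : ℂ)) (x : ℂ) (a : ℂ)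
            * ((1 : Matrix (Fin p) (Fin p) ℂ) ⊗ₖ VM N)
          = ((1 : Matrix (Fin p) (Fin p) ℂ) * 1) ⊗ₖ
              (triToeplitz N (-(a : ℂ)) (x : ℂ) (a : ℂ) * VM N) :=
            (Matrix.mul_kronecker_mul _ _ _ _).symm
        _ = ((1 : Matrix (Fin p) (Fin p) ℂ) * 1) ⊗ₖ (VM N * Matrix.diagonal (fun j : Fin N =>
              (x : ℂ) + 2 * Complex.I * a
                * ((Real.cos (((j : ℕ) + 1) * π / (N + 1)) : ℝ) : ℂ))) := by
            rw [T_mul_VM]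
        _ = _ := Matrix.mul_kronecker_mul _ _ _ _
    · calc S ⊗ₖ antiDiagOnes N * ((1 : Matrix (Fin p) (Fin p) ℂ) ⊗ₖ VM N)
          = (S * 1) ⊗ₖ (antiDiagOnes N * VM N) := (Matrix.mul_kronecker_mul _ _ _ _).symm
        _ = ((1 : Matrix (Fin p) (Fin p) ℂ) * S) ⊗ₖ (VM N * Wsig N) := by
            rw [J_mul_VM, Matrix.mul_one, Matrix.one_mul]
        _ = _ := Matrix.mul_kronecker_mul _ _ _ _
  · calc (1 : Matrix (Fin p) (Fin p) ℂ) ⊗ₖ VM N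
          * ((1 : Matrix (Fin p) (Fin p) ℂ) ⊗ₖ VMinv N)
        = ((1 : Matrix (Fin p) (Fin p) ℂ) * 1) ⊗ₖ (VM N * VMinv N) :=
          (Matrix.mul_kronecker_mul _ _ _ _).symm
      _ = (1 : Matrix (Fin p) (Fin p) ℂ) ⊗ₖ (1 : Matrix (Fin N) (Fin N) ℂ) := by
          rw [VM_mul_VMinv, Matrix.one_mul]
      _ = 1 := Matrix.one_kronecker_one

lemma master_blocks (m p : ℕ) (hm : 1 ≤ m) (dfun : Fin (2 * m) → ℂ)
    (S : Matrix (Fin p) (Fin p) ℂ) :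
    ((1 : Matrix (Fin p) (Fin p) ℂ) ⊗ₖ Matrix.diagonal dfun + S ⊗ₖ Wsig (2 * m)).det
    = ∏ t : Fin m,
        (Matrix.fromBlocks
          (dfun ⟨(t : ℕ), by have := t.isLt; omega⟩ • (1 : Matrix (Fin p) (Fin p) ℂ))
          ((Complex.I ^ (2 * m - 1) * (-1 : ℂ) ^ ((t : ℕ) + 1)) • S)
          ((Complex.I ^ (2 * m - 1) * (-1 : ℂ) ^ (t : ℕ)) • S)
          (dfun ⟨2 * m - 1 - (t : ℕ), by have := t.isLt; omega⟩
            • (1 : Matrix (Fin p) (Fin p) ℂ))).det := by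
  set B : Fin m → Matrix (Fin p ⊕ Fin p) (Fin p ⊕ Fin p) ℂ := fun t =>
    Matrix.fromBlocks
      (dfun ⟨(t : ℕ), by have := t.isLt; omega⟩ • (1 : Matrix (Fin p) (Fin p) ℂ))
      ((Complex.I ^ (2 * m - 1) * (-1 : ℂ) ^ ((t : ℕ) + 1)) • S)
      ((Complex.I ^ (2 * m - 1) * (-1 : ℂ) ^ (t : ℕ)) • S)
      (dfun ⟨2 * m - 1 - (t : ℕ), by have := t.isLt; omega⟩
        • (1 : Matrix (Fin p) (Fin p) ℂ)) with hB
  have hGB : (1 : Matrix (Fin p) (Fin p) ℂ) ⊗ₖ Matrix.diagonal dfun + S ⊗ₖ Wsig (2 * m)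
      = (Matrix.blockDiagonal B).submatrix (pairEquiv p m) (pairEquiv p m) := by
    ext rj sk
    obtain ⟨r, j⟩ := rj
    obtain ⟨s, k⟩ := sk
    rw [Matrix.submatrix_apply]
    rw [Matrix.add_apply, Matrix.kroneckerMap_apply, Matrix.kroneckerMap_apply]
    simp only [pairEquiv, Equiv.coe_fn_mk]
    have hj2 := j.isLt
    have hk2 := k.isLt
    by_cases hj : (j : ℕ) < m <;> by_cases hk : (k : ℕ) < m
    · rw [dif_pos hj, dif_pos hk, Matrix.blockDiagonal_apply]
      by_cases hjk : j = k
      · subst hjk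
        rw [if_pos rfl, hB]
        simp only [Matrix.fromBlocks_apply₁₁, Matrix.smul_apply, Matrix.diagonal_apply_eq,
          Wsig, Matrix.of_apply, smul_eq_mul, Fin.val_mk]
        rw [if_neg (by omega)]
        simp only [mul_zero, add_zero, Fin.eta]
        ring
      · have hne : (⟨(j : ℕ), hj⟩ : Fin m) ≠ ⟨(k : ℕ), hk⟩ := by
          intro hc
          exact hjk (Fin.ext (by simpa using congrArg Fin.val hc))
        rw [if_neg hne, Matrix.diagonal_apply_ne _ hjk]
        simp only [Wsig, Matrix.of_apply]
        rw [if_neg (by omega)]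
        ring
    · rw [dif_pos hj, dif_neg hk, Matrix.blockDiagonal_apply]
      rw [Matrix.diagonal_apply_ne _ (by intro hc; subst hc; omega)]
      simp only [Wsig, Matrix.of_apply]
      by_cases hcond : (j : ℕ) + (k : ℕ) + 1 = 2 * m
      · rw [if_pos hcond, if_pos (Fin.ext (by simp only [Fin.val_mk]; omega))]
        rw [hB]
        simp only [Matrix.fromBlocks_apply₁₂, Matrix.smul_apply, smul_eq_mul, Fin.val_mk]
        rw [neg_pow_flip (k : ℕ) (j : ℕ) (m - 1) (by omega)]
        ring
      · rw [if_neg hcond, if_neg (by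
          intro hc
          have h7 := congrArg Fin.val hc
          simp only [Fin.val_mk] at h7
          omega)]
        ring
    · rw [dif_neg hj, dif_pos hk, Matrix.blockDiagonal_apply]
      rw [Matrix.diagonal_apply_ne _ (by intro hc; subst hc; omega)]
      simp only [Wsig, Matrix.of_apply]
      by_cases hcond : (j : ℕ) + (k : ℕ) + 1 = 2 * m
      · rw [if_pos hcond, if_pos (Fin.ext (by simp only [Fin.val_mk]; omega))]
        rw [hB]
        simp only [Matrix.fromBlocks_apply₂₁, Matrix.smul_apply, smul_eq_mul, Fin.val_mk]
        have hexp : ((-1 : ℂ)) ^ (2 * m - 1 - (j : ℕ)) = (-1) ^ (k : ℕ) := by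
          rw [show 2 * m - 1 - (j : ℕ) = (k : ℕ) by omega]
        rw [hexp]
        ring
      · rw [if_neg hcond, if_neg (by
          intro hc
          have h7 := congrArg Fin.val hc
          simp only [Fin.val_mk] at h7
          omega)]
        ring
    · rw [dif_neg hj, dif_neg hk, Matrix.blockDiagonal_apply]
      simp only [Wsig, Matrix.of_apply]
      rw [if_neg (by omega)]
      by_cases hjk : j = k
      · subst hjk
        rw [if_pos rfl, hB]
        simp only [Matrix.fromBlocks_apply₂₂, Matrix.smul_apply, Matrix.diagonal_apply_eq,
          smul_eq_mul, Fin.val_mk]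
        simp only [show 2 * m - 1 - (2 * m - 1 - (j : ℕ)) = (j : ℕ) from by omega, Fin.eta]
        ring
      · rw [Matrix.diagonal_apply_ne _ hjk, if_neg (by
          intro hc
          have h7 := congrArg Fin.val hc
          simp only [Fin.val_mk] at h7
          exact hjk (Fin.ext (by omega)))]
        ring
  rw [hGB, Matrix.det_submatrix_equiv_self, Matrix.det_blockDiagonal]

lemma coeff_one (m t : ℕ) (hm : 1 ≤ m) :
    (Complex.I ^ (2 * m - 1) * (-1 : ℂ) ^ (t + 1))
      * (Complex.I ^ (2 * m - 1) * (-1 : ℂ) ^ t) = 1 := by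
  have h1 : Complex.I ^ (2 * m - 1) * Complex.I ^ (2 * m - 1) = (-1 : ℂ) ^ (2 * m - 1) := by
    rw [← pow_add, show (2 * m - 1) + (2 * m - 1) = 2 * (2 * m - 1) by omega, pow_mul,
      Complex.I_sq]
  have h2 : ((-1 : ℂ)) ^ (2 * m - 1) = -1 := Odd.neg_one_pow ⟨m - 1, by omega⟩
  have h3 : ((-1 : ℂ)) ^ (t + 1) * (-1) ^ t = -1 := by
    rw [← pow_add, show t + 1 + t = 2 * t + 1 by omega, pow_succ, pow_mul, neg_one_sq,
      one_pow, one_mul]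
  calc (Complex.I ^ (2 * m - 1) * (-1 : ℂ) ^ (t + 1))
        * (Complex.I ^ (2 * m - 1) * (-1 : ℂ) ^ t)
      = (Complex.I ^ (2 * m - 1) * Complex.I ^ (2 * m - 1)) * ((-1 : ℂ) ^ (t + 1) * (-1) ^ t) := by
        ring
    _ = (-1) * (-1) := by rw [h1, h2, h3]
    _ = 1 := by norm_num

lemma dd_prod (x a c : ℝ) :
    ((x : ℂ) + 2 * Complex.I * a * (c : ℂ)) * ((x : ℂ) - 2 * Complex.I * a * (c : ℂ))
      = ((x ^ 2 + 4 * a ^ 2 * c ^ 2 : ℝ) : ℂ) := by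
  push_cast
  linear_combination (-4 * (a : ℂ) ^ 2 * (c : ℂ) ^ 2) * Complex.I_sq

/-- The master determinant reduction. -/
lemma master (m p : ℕ) (hm : 1 ≤ m) (x a : ℝ) (S : Matrix (Fin p) (Fin p) ℂ) :
    ((1 : Matrix (Fin p) (Fin p) ℂ) ⊗ₖ triToeplitz (2 * m) (-(a : ℂ)) (x : ℂ) (a : ℂ)
        + S ⊗ₖ antiDiagOnes (2 * m)).det
    = ∏ t : Fin m,
        ((((x ^ 2 + 4 * a ^ 2
              * Real.cos ((((t : ℕ) : ℝ) + 1) * π / (((2 * m : ℕ) : ℝ) + 1)) ^ 2 : ℝ)) : ℂ)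
            • (1 : Matrix (Fin p) (Fin p) ℂ) - S * S).det := by
  rw [master_conj (2 * m) p x a S, master_blocks m p hm _ S]
  apply Finset.prod_congr rfl
  intro t _
  rw [det_scalar_blocks, coeff_one m (t : ℕ) hm, one_smul]
  have hcos : Real.cos ((((2 * m - 1 - (t : ℕ) : ℕ) : ℝ) + 1) * π / (((2 * m : ℕ) : ℝ) + 1))
      = - Real.cos ((((t : ℕ) : ℝ) + 1) * π / (((2 * m : ℕ) : ℝ) + 1)) := by
    have h0 := cos_pair m (2 * m - 1 - (t : ℕ)) hm (by have := t.isLt; omega)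
      (by have := t.isLt; omega)
    rw [show 2 * m - 1 - (2 * m - 1 - (t : ℕ)) = (t : ℕ) by have := t.isLt; omega] at h0
    linarith
  congr 2
  simp only [Fin.val_mk]
  congr 1
  have hcosC : ((Real.cos ((((2 * m - 1 - (t : ℕ) : ℕ) : ℝ) + 1) * π
        / (((2 * m : ℕ) : ℝ) + 1)) : ℝ) : ℂ)
      = - ((Real.cos ((((t : ℕ) : ℝ) + 1) * π / (((2 * m : ℕ) : ℝ) + 1)) : ℝ) : ℂ) := by
    rw [hcos]
    push_cast
    ring
  rw [hcosC]
  linear_combination dd_prod x a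
    (Real.cos ((((t : ℕ) : ℝ) + 1) * π / (((2 * m : ℕ) : ℝ) + 1)))


/-- odd angles to consecutive angles. -/
lemma prod_odd (n : ℕ) (f : ℝ → ℂ) :
    ∏ l : Fin n, f (Real.cos ((2 * (l : ℕ) + 1) * π / (2 * (n : ℝ) + 1)) ^ 2)
      = ∏ k : Fin n, f (Real.cos ((((k : ℕ) : ℝ) + 1) * π / (2 * (n : ℝ) + 1)) ^ 2) := by
  have hσb : Function.Bijective (fun l : Fin n =>
      if h : 2 * (l : ℕ) + 1 ≤ n then (⟨2 * (l : ℕ), by omega⟩ : Fin n)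
      else ⟨2 * n - 2 * (l : ℕ) - 1, by have := l.isLt; omega⟩) := by
    rw [← Finite.injective_iff_bijective]
    intro l l' h
    have hv := congrArg Fin.val h
    dsimp only at hv
    split_ifs at hv <;> simp only [Fin.val_mk] at hv <;>
      (exact Fin.ext (by have := l.isLt; have := l'.isLt; omega))
  rw [← Fintype.prod_bijective _ hσb
    (fun l : Fin n => f (Real.cos ((2 * (l : ℕ) + 1) * π / (2 * (n : ℝ) + 1)) ^ 2))
    (fun k : Fin n => f (Real.cos ((((k : ℕ) : ℝ) + 1) * π / (2 * (n : ℝ) + 1)) ^ 2)) ?_]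
  intro l
  by_cases h : 2 * (l : ℕ) + 1 ≤ n
  · rw [dif_pos h]
    congr 2
    simp only [Fin.val_mk]
    push_cast
    ring
  · rw [dif_neg h]
    have hl := l.isLt
    congr 1
    simp only [Fin.val_mk]
    have e1 : ((2 * n - 2 * (l : ℕ) - 1 : ℕ) : ℝ) + 1 = 2 * (n : ℝ) - 2 * (l : ℕ) := by
      have h0 : (2 * n - 2 * (l : ℕ) - 1) + 1 = 2 * n - 2 * (l : ℕ) := by omega
      calc ((2 * n - 2 * (l : ℕ) - 1 : ℕ) : ℝ) + 1
          = ((2 * n - 2 * (l : ℕ) - 1 + 1 : ℕ) : ℝ) := by push_cast; ring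
        _ = ((2 * n - 2 * (l : ℕ) : ℕ) : ℝ) := by rw [h0]
        _ = 2 * (n : ℝ) - 2 * (l : ℕ) := by
            rw [Nat.cast_sub (by omega)]; push_cast; ring
    rw [e1]
    have hden : 2 * (n : ℝ) + 1 ≠ 0 := by positivity
    have e2 : (2 * (n : ℝ) - 2 * (l : ℕ)) * π / (2 * (n : ℝ) + 1)
        = π - (2 * (l : ℕ) + 1) * π / (2 * (n : ℝ) + 1) := by
      field_simp
      ring
    rw [e2, Real.cos_pi_sub, neg_sq]

/-- doubling the range of consecutive angles. -/
lemma prod_double (n : ℕ) (f : ℝ → ℂ) :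
    ∏ k : Fin (2 * n), f (Real.cos ((((k : ℕ) : ℝ) + 1) * π / (2 * (n : ℝ) + 1)) ^ 2)
      = (∏ k : Fin n, f (Real.cos ((((k : ℕ) : ℝ) + 1) * π / (2 * (n : ℝ) + 1)) ^ 2)) ^ 2 := by
  set G : ℕ → ℂ := fun k => f (Real.cos (((k : ℝ) + 1) * π / (2 * (n : ℝ) + 1)) ^ 2) with hG
  have h1 : ∏ k : Fin (2 * n), f (Real.cos ((((k : ℕ) : ℝ) + 1) * π / (2 * (n : ℝ) + 1)) ^ 2)
      = ∏ k ∈ Finset.range (2 * n), G k := Fin.prod_univ_eq_prod_range G (2 * n)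
  have h2 : ∏ k : Fin n, f (Real.cos ((((k : ℕ) : ℝ) + 1) * π / (2 * (n : ℝ) + 1)) ^ 2)
      = ∏ k ∈ Finset.range n, G k := Fin.prod_univ_eq_prod_range G n
  rw [h1, h2, show 2 * n = n + n by omega, Finset.prod_range_add]
  have h3 : ∏ k ∈ Finset.range n, G (n + k) = ∏ k ∈ Finset.range n, G k := by
    rw [← Finset.prod_range_reflect (fun k => G (n + k)) n]
    apply Finset.prod_congr rfl
    intro k hk
    rw [Finset.mem_range] at hk
    rw [hG]
    simp only
    congr 1
    have e0 : n + (n - 1 - k) = 2 * n - 1 - k := by omega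
    rw [e0]
    have e1 : ((2 * n - 1 - k : ℕ) : ℝ) + 1 = 2 * (n : ℝ) - k := by
      have h0 : (2 * n - 1 - k) + 1 = 2 * n - k := by omega
      calc ((2 * n - 1 - k : ℕ) : ℝ) + 1 = ((2 * n - 1 - k + 1 : ℕ) : ℝ) := by push_cast; ring
        _ = ((2 * n - k : ℕ) : ℝ) := by rw [h0]
        _ = 2 * (n : ℝ) - k := by rw [Nat.cast_sub (by omega)]; push_cast; ring
    rw [e1]
    have hden : 2 * (n : ℝ) + 1 ≠ 0 := by positivity
    have e2 : (2 * (n : ℝ) - k) * π / (2 * (n : ℝ) + 1)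
        = π - ((k : ℝ) + 1) * π / (2 * (n : ℝ) + 1) := by
      field_simp
      ring
    rw [e2, Real.cos_pi_sub, neg_sq]
  rw [h3]
  ring

lemma prod_Icc_fin (m : ℕ) (g : ℕ → ℝ) :
    ∏ j ∈ Finset.Icc 1 m, g j = ∏ t : Fin m, g ((t : ℕ) + 1) := by
  rw [Fin.prod_univ_eq_prod_range (fun t => g (t + 1)) m]
  rw [← Finset.Ico_add_one_right_eq_Icc, Finset.prod_Ico_eq_prod_range]
  try simp only [Nat.add_sub_cancel]
  exact Finset.prod_congr rfl fun k _ => by rw [Nat.add_comm 1 k]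

lemma factor_cast (X b c : ℝ) :
    ((X : ℝ) : ℂ) - (2 * Complex.I * b * (c : ℂ)) ^ 2 = ((X + 4 * b ^ 2 * c ^ 2 : ℝ) : ℂ) := by
  push_cast
  linear_combination (-4 * (b : ℂ) ^ 2 * (c : ℂ) ^ 2) * Complex.I_sq


end QGD

open QGD in
theorem quotient_grid_dicot_partition_function (m n : ℕ) (hm : 1 ≤ m) (hn : 1 ≤ n)
    (x a b : ℝ) :
    letI Ktilde : Matrix (Fin n × Fin (2 * m)) (Fin n × Fin (2 * m)) ℂ :=
      (1 : Matrix (Fin n) (Fin n) ℂ) ⊗ₖ triToeplitz (2 * m) (-(a:ℂ)) (x:ℂ) (a:ℂ)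
        + triToeplitz n (-(b:ℂ)) 0 (b:ℂ) ⊗ₖ antiDiagOnes (2 * m)
        + (Complex.I * (b:ℂ)) • (cornerOne n ⊗ₖ antiDiagOnes (2 * m))
    Ktilde.det
      = (((∏ j ∈ Finset.Icc 1 m, ∏ k ∈ Finset.Icc 1 n,
            (x ^ 2 + 4 * a ^ 2 * Real.cos ((j : ℝ) * Real.pi / (2 * (m : ℝ) + 1)) ^ 2
              + 4 * b ^ 2 * Real.cos ((k : ℝ) * Real.pi / (2 * (n : ℝ) + 1)) ^ 2)) : ℝ) : ℂ)
    ∧ Ktilde.det ^ 2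
      = ((1 : Matrix (Fin (2 * n)) (Fin (2 * n)) ℂ) ⊗ₖ triToeplitz (2 * m) (-(a:ℂ)) (x:ℂ) (a:ℂ)
          + triToeplitz (2 * n) (-(b:ℂ)) 0 (b:ℂ) ⊗ₖ antiDiagOnes (2 * m)).det := by
  set Ktilde : Matrix (Fin n × Fin (2 * m)) (Fin n × Fin (2 * m)) ℂ :=
      (1 : Matrix (Fin n) (Fin n) ℂ) ⊗ₖ triToeplitz (2 * m) (-(a:ℂ)) (x:ℂ) (a:ℂ)
        + triToeplitz n (-(b:ℂ)) 0 (b:ℂ) ⊗ₖ antiDiagOnes (2 * m)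
        + (Complex.I * (b:ℂ)) • (cornerOne n ⊗ₖ antiDiagOnes (2 * m)) with hKdef
  have hK0 : Ktilde = (1 : Matrix (Fin n) (Fin n) ℂ)
        ⊗ₖ triToeplitz (2 * m) (-(a : ℂ)) (x : ℂ) (a : ℂ)
      + (triToeplitz n (-(b : ℂ)) 0 (b : ℂ) + (Complex.I * (b : ℂ)) • cornerOne n)
        ⊗ₖ antiDiagOnes (2 * m) := by
    rw [hKdef, add_assoc, ← Matrix.smul_kronecker, ← Matrix.add_kronecker]
  have hmain : Ktilde.det = ∏ t : Fin m, ∏ k : Fin n,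
      (((x ^ 2 + 4 * a ^ 2 * Real.cos ((((t : ℕ) : ℝ) + 1) * π / (((2 * m : ℕ) : ℝ) + 1)) ^ 2
          + 4 * b ^ 2 * Real.cos ((((k : ℕ) : ℝ) + 1) * π / (2 * (n : ℝ) + 1)) ^ 2 : ℝ)) : ℂ) := by
    rw [hK0, master m n hm x a _]
    apply Finset.prod_congr rfl
    intro t _
    rw [det_smul_one_sub_sq _ (UM n) (UMinv n)
      (fun l : Fin n => 2 * Complex.I * b
        * ((Real.cos ((2 * (l : ℕ) + 1) * π / (2 * n + 1)) : ℝ) : ℂ))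
      (S1_mul_UM n b) (UM_mul_UMinv n) (UMinv_mul_UM n)]
    set X : ℝ := x ^ 2 + 4 * a ^ 2
        * Real.cos ((((t : ℕ) : ℝ) + 1) * π / (((2 * m : ℕ) : ℝ) + 1)) ^ 2 with hX
    calc ∏ l : Fin n, (((X : ℝ) : ℂ)
          - (2 * Complex.I * b * ((Real.cos ((2 * (l : ℕ) + 1) * π / (2 * n + 1)) : ℝ) : ℂ)) ^ 2)
        = ∏ l : Fin n, (fun r : ℝ => ((X + 4 * b ^ 2 * r : ℝ) : ℂ))
            (Real.cos ((2 * (l : ℕ) + 1) * π / (2 * (n : ℝ) + 1)) ^ 2) := by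
          apply Finset.prod_congr rfl
          intro l _
          exact factor_cast X b (Real.cos ((2 * (l : ℕ) + 1) * π / (2 * (n : ℝ) + 1)))
      _ = ∏ k : Fin n, (fun r : ℝ => ((X + 4 * b ^ 2 * r : ℝ) : ℂ))
            (Real.cos ((((k : ℕ) : ℝ) + 1) * π / (2 * (n : ℝ) + 1)) ^ 2) :=
          prod_odd n (fun r : ℝ => ((X + 4 * b ^ 2 * r : ℝ) : ℂ))
      _ = _ := rfl
  constructor
  · rw [hmain]
    have hreal : ∏ j ∈ Finset.Icc 1 m, ∏ k ∈ Finset.Icc 1 n,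
        (x ^ 2 + 4 * a ^ 2 * Real.cos ((j : ℝ) * Real.pi / (2 * (m : ℝ) + 1)) ^ 2
          + 4 * b ^ 2 * Real.cos ((k : ℝ) * Real.pi / (2 * (n : ℝ) + 1)) ^ 2)
        = ∏ t : Fin m, ∏ k : Fin n,
        (x ^ 2 + 4 * a ^ 2 * Real.cos ((((t : ℕ) : ℝ) + 1) * π / (((2 * m : ℕ) : ℝ) + 1)) ^ 2
          + 4 * b ^ 2 * Real.cos ((((k : ℕ) : ℝ) + 1) * π / (2 * (n : ℝ) + 1)) ^ 2) := by
      rw [prod_Icc_fin m (fun j => ∏ k ∈ Finset.Icc 1 n,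
        (x ^ 2 + 4 * a ^ 2 * Real.cos ((j : ℝ) * Real.pi / (2 * (m : ℝ) + 1)) ^ 2
          + 4 * b ^ 2 * Real.cos ((k : ℝ) * Real.pi / (2 * (n : ℝ) + 1)) ^ 2))]
      apply Finset.prod_congr rfl
      intro t _
      rw [prod_Icc_fin n (fun k =>
        (x ^ 2 + 4 * a ^ 2 * Real.cos ((((t : ℕ) + 1 : ℕ) : ℝ) * Real.pi / (2 * (m : ℝ) + 1)) ^ 2
          + 4 * b ^ 2 * Real.cos ((k : ℝ) * Real.pi / (2 * (n : ℝ) + 1)) ^ 2))]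
      apply Finset.prod_congr rfl
      intro k _
      have e1 : (((t : ℕ) + 1 : ℕ) : ℝ) * Real.pi / (2 * (m : ℝ) + 1)
          = (((t : ℕ) : ℝ) + 1) * π / (((2 * m : ℕ) : ℝ) + 1) := by push_cast; ring
      have e2 : (((k : ℕ) + 1 : ℕ) : ℝ) * Real.pi / (2 * (n : ℝ) + 1)
          = (((k : ℕ) : ℝ) + 1) * π / (2 * (n : ℝ) + 1) := by push_cast; ring
      rw [e1, e2]
    rw [hreal, Complex.ofReal_prod]
    apply Finset.prod_congr rfl
    intro t _
    rw [Complex.ofReal_prod]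
  · have hS2V : triToeplitz (2 * n) (-(b : ℂ)) 0 (b : ℂ) * VM (2 * n)
        = VM (2 * n) * Matrix.diagonal (fun k : Fin (2 * n) =>
            2 * Complex.I * b * ((Real.cos (((k : ℕ) + 1) * π / ((2 * n : ℕ) + 1)) : ℝ) : ℂ)) := by
      have h0 := T_mul_VM (2 * n) 0 b
      simpa using h0
    have hK2 : ((1 : Matrix (Fin (2 * n)) (Fin (2 * n)) ℂ)
          ⊗ₖ triToeplitz (2 * m) (-(a:ℂ)) (x:ℂ) (a:ℂ)
        + triToeplitz (2 * n) (-(b:ℂ)) 0 (b:ℂ) ⊗ₖ antiDiagOnes (2 * m)).det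
        = ∏ t : Fin m, ∏ k : Fin (2 * n),
        (((x ^ 2 + 4 * a ^ 2 * Real.cos ((((t : ℕ) : ℝ) + 1) * π / (((2 * m : ℕ) : ℝ) + 1)) ^ 2
            + 4 * b ^ 2
              * Real.cos ((((k : ℕ) : ℝ) + 1) * π / (2 * (n : ℝ) + 1)) ^ 2 : ℝ)) : ℂ) := by
      rw [master m (2 * n) hm x a _]
      apply Finset.prod_congr rfl
      intro t _
      rw [det_smul_one_sub_sq _ (VM (2 * n)) (VMinv (2 * n)) _ hS2V
        (VM_mul_VMinv (2 * n)) (VMinv_mul_VM (2 * n))]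
      apply Finset.prod_congr rfl
      intro k _
      have e3 : (((k : ℕ) : ℝ) + 1) * π / (((2 * n : ℕ) : ℝ) + 1)
          = (((k : ℕ) : ℝ) + 1) * π / (2 * (n : ℝ) + 1) := by push_cast; ring
      rw [e3]
      exact factor_cast _ b (Real.cos ((((k : ℕ) : ℝ) + 1) * π / (2 * (n : ℝ) + 1)))
    rw [hK2, hmain]
    rw [← Finset.prod_pow]
    apply Finset.prod_congr rfl
    intro t _
    exact (prod_double n (fun r : ℝ =>
      ((x ^ 2 + 4 * a ^ 2 * Real.cos ((((t : ℕ) : ℝ) + 1) * π / (((2 * m : ℕ) : ℝ) + 1)) ^ 2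
        + 4 * b ^ 2 * r : ℝ) : ℂ))).symm
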